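/- Let H0, λ, t0 be positive real numbers, let α > 1, and let h : [t0,∞) → ℝ be of class C¹ with |h'(t)| ≤ H0/t for every t ≥ t0. Then for every t ≥ t0 one has |∫_{t0}^t sin(s^α)·cos(2λs + 2h(s))/s ds| ≤ 5(H0 + 2)/(λ·t0) + (log 3)/(α − 1). -/

import Mathlib

open Real Set Filter MeasureTheory intervalIntegral

lemma ibp_core (a b μ M G : ℝ) (ha : 0 < a) (hab : a ≤ b) (hμ : 0 < μ)
    (F e φ' φ'' g g' : ℝ → ℝ)
    (hF : ∀ s ∈ Icc a b, HasDerivAt F (e s * φ' s) s)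
    (hFb : ∀ s ∈ Icc a b, |F s| ≤ 1)
    (he : ContinuousOn e (Icc a b))
    (hφ' : ∀ s ∈ Icc a b, HasDerivAt φ' (φ'' s) s)
    (hφ''c : ContinuousOn φ'' (Icc a b))
    (hφμ : ∀ s ∈ Icc a b, μ ≤ φ' s)
    (hsign : (∀ s ∈ Icc a b, 0 ≤ φ'' s) ∨ (∀ s ∈ Icc a b, φ'' s ≤ 0))
    (hg : ∀ s ∈ Icc a b, HasDerivAt g (g' s) s)
    (hg'c : ContinuousOn g' (Icc a b))
    (hgM : ∀ s ∈ Icc a b, |g s| ≤ M)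
    (hG : (∫ s in a..b, |g' s|) ≤ G) :
    |∫ s in a..b, e s * g s| ≤ (3 * M + G) / μ := by
  have huIcc : uIcc a b = Icc a b := uIcc_of_le hab
  have hmem : ∀ s ∈ Icc a b, 0 < φ' s := fun s hs => lt_of_lt_of_le hμ (hφμ s hs)
  have hφ'c : ContinuousOn φ' (Icc a b) := fun s hs => (hφ' s hs).continuousAt.continuousWithinAt
  have hgc : ContinuousOn g (Icc a b) := fun s hs => (hg s hs).continuousAt.continuousWithinAt
  have hFc : ContinuousOn F (Icc a b) := fun s hs => (hF s hs).continuousAt.continuousWithinAt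
  -- v = g / φ'
  set v : ℝ → ℝ := fun s => g s / φ' s with hv_def
  set v' : ℝ → ℝ := fun s => (g' s * φ' s - g s * φ'' s) / (φ' s) ^ 2 with hv'_def
  have hv : ∀ s ∈ Icc a b, HasDerivAt v (v' s) s := fun s hs =>
    (hg s hs).div (hφ' s hs) (ne_of_gt (hmem s hs))
  have hvc : ContinuousOn v (Icc a b) := hgc.div hφ'c (fun s hs => ne_of_gt (hmem s hs))
  have hv'c : ContinuousOn v' (Icc a b) := by
    apply ContinuousOn.div
    · exact (hg'c.mul hφ'c).sub (hgc.mul hφ''c)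
    · exact hφ'c.pow 2
    · exact fun s hs => pow_ne_zero 2 (ne_of_gt (hmem s hs))
  have hFint : IntervalIntegrable (fun s => e s * φ' s) volume a b := by
    apply ContinuousOn.intervalIntegrable; rw [huIcc]; exact he.mul hφ'c
  have hv'int : IntervalIntegrable v' volume a b := by
    apply ContinuousOn.intervalIntegrable; rw [huIcc]; exact hv'c
  -- IBP
  have hibp : ∫ s in a..b, v s * (e s * φ' s) =
      v b * F b - v a * F a - ∫ s in a..b, v' s * F s := by
    apply intervalIntegral.integral_mul_deriv_eq_deriv_mul (u := v) (v := F)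
    · rw [huIcc]; exact hv
    · rw [huIcc]; exact hF
    · exact hv'int
    · exact hFint
  have heq : ∫ s in a..b, e s * g s = ∫ s in a..b, v s * (e s * φ' s) := by
    apply integral_congr
    intro s hs
    rw [huIcc] at hs
    have := ne_of_gt (hmem s hs)
    show e s * g s = g s / φ' s * (e s * φ' s)
    rw [div_mul_eq_mul_div, eq_div_iff this]; ring
  have hMnn : 0 ≤ M := le_trans (abs_nonneg _) (hgM a ⟨le_refl a, hab⟩)
  have hvb : ∀ s ∈ Icc a b, |v s| ≤ M / μ := by
    intro s hs
    rw [hv_def, abs_div, abs_of_pos (hmem s hs)]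
    exact div_le_div₀ (le_trans (abs_nonneg _) (hgM s hs)) (hgM s hs) hμ (hφμ s hs)
  -- bound ∫ |φ''|/φ'^2 ≤ 1/μ
  have hinvderiv : ∀ s ∈ Icc a b, HasDerivAt (fun x => -(φ' x)⁻¹) (φ'' s / (φ' s) ^ 2) s := by
    intro s hs
    have h1 := ((hφ' s hs).inv (ne_of_gt (hmem s hs))).fun_neg
    refine h1.congr_deriv ?_
    ring
  have hratint : IntervalIntegrable (fun s => φ'' s / (φ' s) ^ 2) volume a b := by
    apply ContinuousOn.intervalIntegrable; rw [huIcc]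
    exact hφ''c.div (hφ'c.pow 2) (fun s hs => pow_ne_zero 2 (ne_of_gt (hmem s hs)))
  have hFTC : ∫ s in a..b, φ'' s / (φ' s) ^ 2 = (φ' a)⁻¹ - (φ' b)⁻¹ := by
    rw [integral_eq_sub_of_hasDerivAt (fun s hs => hinvderiv s (huIcc ▸ hs)) hratint]
    ring
  have haI : a ∈ Icc a b := ⟨le_refl a, hab⟩
  have hbI : b ∈ Icc a b := ⟨hab, le_refl b⟩
  have hratbound : ∫ s in a..b, |φ'' s| / (φ' s) ^ 2 ≤ 1 / μ := by
    rcases hsign with hpos | hneg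
    · have : ∫ s in a..b, |φ'' s| / (φ' s) ^ 2 = ∫ s in a..b, φ'' s / (φ' s) ^ 2 := by
        apply integral_congr; intro s hs; rw [huIcc] at hs
        show |φ'' s| / φ' s ^ 2 = φ'' s / φ' s ^ 2
        rw [abs_of_nonneg (hpos s hs)]
      rw [this, hFTC]
      have h1 : (φ' a)⁻¹ ≤ 1 / μ := by
        rw [one_div]; exact inv_anti₀ hμ (hφμ a haI)
      have h2 : 0 < (φ' b)⁻¹ := inv_pos.mpr (hmem b hbI)
      linarith
    · have : ∫ s in a..b, |φ'' s| / (φ' s) ^ 2 = -∫ s in a..b, φ'' s / (φ' s) ^ 2 := by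
        rw [← intervalIntegral.integral_neg]
        apply integral_congr; intro s hs; rw [huIcc] at hs
        show |φ'' s| / φ' s ^ 2 = -(φ'' s / φ' s ^ 2)
        rw [abs_of_nonpos (hneg s hs)]; ring
      rw [this, hFTC]
      have h1 : (φ' b)⁻¹ ≤ 1 / μ := by
        rw [one_div]; exact inv_anti₀ hμ (hφμ b hbI)
      have h2 : 0 < (φ' a)⁻¹ := inv_pos.mpr (hmem a haI)
      linarith
  -- pointwise bound on v'
  have hv'bound : ∀ s ∈ Icc a b, |v' s| ≤ |g' s| / μ + M * (|φ'' s| / (φ' s) ^ 2) := by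
    intro s hs
    have hP := hmem s hs
    have hPμ := hφμ s hs
    show |(g' s * φ' s - g s * φ'' s) / φ' s ^ 2| ≤ _
    rw [abs_div, abs_of_pos (pow_pos hP 2)]
    have h1 : |g' s * φ' s - g s * φ'' s| ≤ |g' s| * φ' s + M * |φ'' s| := by
      calc |g' s * φ' s - g s * φ'' s| ≤ |g' s * φ' s| + |g s * φ'' s| := abs_sub _ _
        _ = |g' s| * φ' s + |g s| * |φ'' s| := by rw [abs_mul, abs_mul, abs_of_pos hP]
        _ ≤ |g' s| * φ' s + M * |φ'' s| := by gcongr; exact hgM s hs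
    calc |g' s * φ' s - g s * φ'' s| / φ' s ^ 2
        ≤ (|g' s| * φ' s + M * |φ'' s|) / φ' s ^ 2 := by gcongr
      _ = |g' s| / φ' s + M * (|φ'' s| / (φ' s) ^ 2) := by field_simp
      _ ≤ |g' s| / μ + M * (|φ'' s| / (φ' s) ^ 2) := by gcongr
  have hRHSint : IntervalIntegrable (fun s => |g' s| / μ + M * (|φ'' s| / (φ' s) ^ 2)) volume a b := by
    apply ContinuousOn.intervalIntegrable; rw [huIcc]
    apply ContinuousOn.add
    · exact (hg'c.abs).div_const μ
    · exact ((hφ''c.abs.div (hφ'c.pow 2) (fun s hs => pow_ne_zero 2 (ne_of_gt (hmem s hs)))).const_smul M)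
  have hg'int : IntervalIntegrable (fun s => |g' s|) volume a b := by
    apply ContinuousOn.intervalIntegrable; rw [huIcc]; exact hg'c.abs
  have habsratint : IntervalIntegrable (fun s => |φ'' s| / (φ' s) ^ 2) volume a b := by
    apply ContinuousOn.intervalIntegrable; rw [huIcc]
    exact hφ''c.abs.div (hφ'c.pow 2) (fun s hs => pow_ne_zero 2 (ne_of_gt (hmem s hs)))
  have hmain : |∫ s in a..b, v' s * F s| ≤ G / μ + M * (1 / μ) := by
    calc |∫ s in a..b, v' s * F s| ≤ ∫ s in a..b, |v' s * F s| :=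
          abs_integral_le_integral_abs hab
      _ ≤ ∫ s in a..b, (|g' s| / μ + M * (|φ'' s| / (φ' s) ^ 2)) := by
          apply integral_mono_on hab _ hRHSint
          · intro s hs
            calc |v' s * F s| = |v' s| * |F s| := abs_mul _ _
              _ ≤ |v' s| * 1 := by
                  have := abs_nonneg (v' s)
                  exact mul_le_mul_of_nonneg_left (hFb s hs) this
              _ = |v' s| := mul_one _
              _ ≤ _ := hv'bound s hs
          · apply ContinuousOn.intervalIntegrable; rw [huIcc]
            exact (hv'c.mul hFc).abs
      _ = (∫ s in a..b, |g' s|) / μ + M * ∫ s in a..b, |φ'' s| / (φ' s) ^ 2 := by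
          rw [intervalIntegral.integral_add (hg'int.div_const μ) (habsratint.const_mul M),
            intervalIntegral.integral_div, intervalIntegral.integral_const_mul]
      _ ≤ G / μ + M * (1 / μ) := by
          have h1 : (∫ s in a..b, |g' s|) / μ ≤ G / μ := (div_le_div_iff_of_pos_right hμ).mpr hG
          have h2 : M * ∫ s in a..b, |φ'' s| / (φ' s) ^ 2 ≤ M * (1 / μ) :=
            mul_le_mul_of_nonneg_left hratbound hMnn
          linarith
  have hbd : |∫ s in a..b, e s * g s| ≤ M / μ + M / μ + (G / μ + M * (1 / μ)) := by
    rw [heq, hibp]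
    calc |v b * F b - v a * F a - ∫ s in a..b, v' s * F s|
        ≤ |v b * F b - v a * F a| + |∫ s in a..b, v' s * F s| := abs_sub _ _
      _ ≤ (|v b * F b| + |v a * F a|) + |∫ s in a..b, v' s * F s| := by
          gcongr; exact abs_sub _ _
      _ ≤ M / μ + M / μ + (G / μ + M * (1 / μ)) := by
          have h1 : |v b * F b| ≤ M / μ := by
            rw [abs_mul]
            calc |v b| * |F b| ≤ (M / μ) * 1 :=
                mul_le_mul (hvb b hbI) (hFb b hbI) (abs_nonneg _) (by positivity)
              _ = M / μ := mul_one _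
          have h2 : |v a * F a| ≤ M / μ := by
            rw [abs_mul]
            calc |v a| * |F a| ≤ (M / μ) * 1 :=
                mul_le_mul (hvb a haI) (hFb a haI) (abs_nonneg _) (by positivity)
              _ = M / μ := mul_one _
          linarith [hmain]
  have : (3 * M + G) / μ = M / μ + M / μ + (G / μ + M * (1 / μ)) := by
    field_simp; ring
  linarith [hbd]

lemma osc_sin_div (a b μ W : ℝ) (ha : 0 < a) (hab : a ≤ b) (hμ : 0 < μ) (hW : 0 ≤ W)
    (φ φ' φ'' w w' : ℝ → ℝ)
    (hφ : ∀ s ∈ Icc a b, HasDerivAt φ (φ' s) s)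
    (hφ'd : ∀ s ∈ Icc a b, HasDerivAt φ' (φ'' s) s)
    (hφ''c : ContinuousOn φ'' (Icc a b))
    (hφμ : ∀ s ∈ Icc a b, μ ≤ φ' s)
    (hsign : (∀ s ∈ Icc a b, 0 ≤ φ'' s) ∨ (∀ s ∈ Icc a b, φ'' s ≤ 0))
    (hw : ∀ s ∈ Icc a b, HasDerivAt w (w' s) s)
    (hw'c : ContinuousOn w' (Icc a b))
    (hwb : ∀ s ∈ Icc a b, |w' s| ≤ W / s) :
    |∫ s in a..b, Real.sin (φ s + w s) / s| ≤ 2 * (W + 4) / (μ * a) := by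
  have huIcc : uIcc a b = Icc a b := uIcc_of_le hab
  have hspos : ∀ s ∈ Icc a b, (0:ℝ) < s := fun s hs => lt_of_lt_of_le ha hs.1
  have hwc : ContinuousOn w (Icc a b) := fun s hs => (hw s hs).continuousAt.continuousWithinAt
  have hφc : ContinuousOn φ (Icc a b) := fun s hs => (hφ s hs).continuousAt.continuousWithinAt
  have hsc : ContinuousOn (fun s : ℝ => s) (Icc a b) := continuousOn_id
  have hsne : ∀ s ∈ Icc a b, (s:ℝ) ≠ 0 := fun s hs => ne_of_gt (hspos s hs)
  -- amplitudes
  set g1 : ℝ → ℝ := fun s => Real.cos (w s) / s with hg1_def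
  set g1' : ℝ → ℝ := fun s => (-Real.sin (w s) * w' s * s - Real.cos (w s) * 1) / s ^ 2
    with hg1'_def
  set g2 : ℝ → ℝ := fun s => Real.sin (w s) / s with hg2_def
  set g2' : ℝ → ℝ := fun s => (Real.cos (w s) * w' s * s - Real.sin (w s) * 1) / s ^ 2
    with hg2'_def
  have hg1 : ∀ s ∈ Icc a b, HasDerivAt g1 (g1' s) s := fun s hs =>
    ((hw s hs).cos).div (hasDerivAt_id s) (hsne s hs)
  have hg2 : ∀ s ∈ Icc a b, HasDerivAt g2 (g2' s) s := fun s hs =>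
    ((hw s hs).sin).div (hasDerivAt_id s) (hsne s hs)
  have hg1'c : ContinuousOn g1' (Icc a b) := by
    apply ContinuousOn.div
    · exact ((((Real.continuous_sin.comp_continuousOn hwc).neg).mul hw'c).mul hsc).sub ((Real.continuous_cos.comp_continuousOn hwc).mul continuousOn_const)
    · exact hsc.pow 2
    · exact fun s hs => pow_ne_zero 2 (hsne s hs)
  have hg2'c : ContinuousOn g2' (Icc a b) := by
    apply ContinuousOn.div
    · exact (((Real.continuous_cos.comp_continuousOn hwc).mul hw'c).mul hsc).sub ((Real.continuous_sin.comp_continuousOn hwc).mul continuousOn_const)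
    · exact hsc.pow 2
    · exact fun s hs => pow_ne_zero 2 (hsne s hs)
  -- bounds on amplitudes
  have hg1M : ∀ s ∈ Icc a b, |g1 s| ≤ 1 / a := by
    intro s hs
    rw [hg1_def]
    show |Real.cos (w s) / s| ≤ 1 / a
    rw [abs_div, abs_of_pos (hspos s hs)]
    exact div_le_div₀ (by norm_num) (Real.abs_cos_le_one _) ha hs.1
  have hg2M : ∀ s ∈ Icc a b, |g2 s| ≤ 1 / a := by
    intro s hs
    rw [hg2_def]
    show |Real.sin (w s) / s| ≤ 1 / a
    rw [abs_div, abs_of_pos (hspos s hs)]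
    exact div_le_div₀ (by norm_num) (Real.abs_sin_le_one _) ha hs.1
  -- derivative bounds
  have hnum1 : ∀ s ∈ Icc a b, |g1' s| ≤ (W + 1) / s ^ 2 := by
    intro s hs
    have hsp := hspos s hs
    rw [hg1'_def]
    show |(-Real.sin (w s) * w' s * s - Real.cos (w s) * 1) / s ^ 2| ≤ (W + 1) / s ^ 2
    rw [abs_div, abs_of_pos (pow_pos hsp 2)]
    gcongr
    have h1 : |(-Real.sin (w s) * w' s)| ≤ W / s := by
      rw [abs_mul, abs_neg]
      calc |Real.sin (w s)| * |w' s| ≤ 1 * (W / s) :=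
            mul_le_mul (Real.abs_sin_le_one _) (hwb s hs) (abs_nonneg _) zero_le_one
        _ = W / s := one_mul _
    have h1' : |(-Real.sin (w s) * w' s)| * s ≤ W := by
      calc |(-Real.sin (w s) * w' s)| * s ≤ (W / s) * s :=
            mul_le_mul_of_nonneg_right h1 (le_of_lt hsp)
        _ = W := div_mul_cancel₀ W (ne_of_gt hsp)
    calc |(-Real.sin (w s) * w' s * s - Real.cos (w s) * 1)|
        ≤ |(-Real.sin (w s) * w' s) * s| + |Real.cos (w s) * 1| := abs_sub _ _
      _ = |(-Real.sin (w s) * w' s)| * s + |Real.cos (w s)| := by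
          simp [abs_mul, abs_of_pos hsp]
      _ ≤ W + 1 := add_le_add h1' (Real.abs_cos_le_one _)
  have hnum2 : ∀ s ∈ Icc a b, |g2' s| ≤ (W + 1) / s ^ 2 := by
    intro s hs
    have hsp := hspos s hs
    rw [hg2'_def]
    show |(Real.cos (w s) * w' s * s - Real.sin (w s) * 1) / s ^ 2| ≤ (W + 1) / s ^ 2
    rw [abs_div, abs_of_pos (pow_pos hsp 2)]
    gcongr
    have h1 : |(Real.cos (w s) * w' s)| ≤ W / s := by
      rw [abs_mul]
      calc |Real.cos (w s)| * |w' s| ≤ 1 * (W / s) :=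
            mul_le_mul (Real.abs_cos_le_one _) (hwb s hs) (abs_nonneg _) zero_le_one
        _ = W / s := one_mul _
    have h1' : |(Real.cos (w s) * w' s)| * s ≤ W := by
      calc |(Real.cos (w s) * w' s)| * s ≤ (W / s) * s :=
            mul_le_mul_of_nonneg_right h1 (le_of_lt hsp)
        _ = W := div_mul_cancel₀ W (ne_of_gt hsp)
    calc |(Real.cos (w s) * w' s * s - Real.sin (w s) * 1)|
        ≤ |(Real.cos (w s) * w' s) * s| + |Real.sin (w s) * 1| := abs_sub _ _
      _ = |(Real.cos (w s) * w' s)| * s + |Real.sin (w s)| := by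
          simp [abs_mul, abs_of_pos hsp]
      _ ≤ W + 1 := add_le_add h1' (Real.abs_sin_le_one _)
  -- integral of the derivative bounds
  have hinvsq : ∫ s in a..b, (W + 1) / s ^ 2 ≤ (W + 1) / a := by
    have hderiv : ∀ s ∈ uIcc a b, HasDerivAt (fun x : ℝ => -(W + 1) * x⁻¹) ((W + 1) / s ^ 2) s := by
      intro s hs
      rw [huIcc] at hs
      have h1 := (hasDerivAt_inv (hsne s hs)).const_mul (-(W + 1))
      refine h1.congr_deriv ?_
      ring
    have hint : IntervalIntegrable (fun s : ℝ => (W + 1) / s ^ 2) volume a b := by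
      apply ContinuousOn.intervalIntegrable; rw [huIcc]
      exact continuousOn_const.div (hsc.pow 2) (fun s hs => pow_ne_zero 2 (hsne s hs))
    rw [integral_eq_sub_of_hasDerivAt hderiv hint]
    have hbpos : 0 < b := lt_of_lt_of_le ha hab
    have : -(W + 1) * b⁻¹ - -(W + 1) * a⁻¹ = (W + 1) / a - (W + 1) / b := by
      field_simp; ring
    rw [this]
    have : 0 ≤ (W + 1) / b := by positivity
    linarith
  have habs_int : ∀ (g' : ℝ → ℝ), ContinuousOn g' (Icc a b) →
      (∀ s ∈ Icc a b, |g' s| ≤ (W + 1) / s ^ 2) → (∫ s in a..b, |g' s|) ≤ (W + 1) / a := by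
    intro g' hc hb
    calc (∫ s in a..b, |g' s|) ≤ ∫ s in a..b, (W + 1) / s ^ 2 := by
          apply integral_mono_on hab
          · apply ContinuousOn.intervalIntegrable; rw [huIcc]; exact hc.abs
          · apply ContinuousOn.intervalIntegrable; rw [huIcc]
            exact continuousOn_const.div (hsc.pow 2) (fun s hs => pow_ne_zero 2 (hsne s hs))
          · exact hb
      _ ≤ (W + 1) / a := hinvsq
  -- apply ibp_core to the two pieces
  have hT1 : |∫ s in a..b, Real.sin (φ s) * g1 s| ≤ (3 * (1 / a) + (W + 1) / a) / μ := by
    apply ibp_core a b μ (1 / a) ((W + 1) / a) ha hab hμ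
      (fun s => -Real.cos (φ s)) (fun s => Real.sin (φ s)) φ' φ'' g1 g1'
    · intro s hs
      have h1 := ((hφ s hs).cos).fun_neg
      refine h1.congr_deriv ?_; ring
    · intro s hs
      rw [abs_neg]; exact Real.abs_cos_le_one _
    · exact Real.continuous_sin.comp_continuousOn hφc
    · exact hφ'd
    · exact hφ''c
    · exact hφμ
    · exact hsign
    · exact hg1
    · exact hg1'c
    · exact hg1M
    · exact habs_int g1' hg1'c hnum1
  have hT2 : |∫ s in a..b, Real.cos (φ s) * g2 s| ≤ (3 * (1 / a) + (W + 1) / a) / μ := by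
    apply ibp_core a b μ (1 / a) ((W + 1) / a) ha hab hμ
      (fun s => Real.sin (φ s)) (fun s => Real.cos (φ s)) φ' φ'' g2 g2'
    · intro s hs
      exact (hφ s hs).sin
    · intro s hs
      exact Real.abs_sin_le_one _
    · exact Real.continuous_cos.comp_continuousOn hφc
    · exact hφ'd
    · exact hφ''c
    · exact hφμ
    · exact hsign
    · exact hg2
    · exact hg2'c
    · exact hg2M
    · exact habs_int g2' hg2'c hnum2
  -- combine
  have hsplit : ∫ s in a..b, Real.sin (φ s + w s) / s =
      (∫ s in a..b, Real.sin (φ s) * g1 s) + ∫ s in a..b, Real.cos (φ s) * g2 s := by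
    rw [← intervalIntegral.integral_add]
    · apply integral_congr
      intro s hs
      rw [huIcc] at hs
      show Real.sin (φ s + w s) / s = Real.sin (φ s) * (Real.cos (w s) / s) +
        Real.cos (φ s) * (Real.sin (w s) / s)
      rw [Real.sin_add]
      field_simp
    · apply ContinuousOn.intervalIntegrable; rw [huIcc]
      exact (Real.continuous_sin.comp_continuousOn hφc).mul
        ((Real.continuous_cos.comp_continuousOn hwc).div hsc hsne)
    · apply ContinuousOn.intervalIntegrable; rw [huIcc]
      exact (Real.continuous_cos.comp_continuousOn hφc).mul
        ((Real.continuous_sin.comp_continuousOn hwc).div hsc hsne)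
  rw [hsplit]
  have harith : (3 * (1 / a) + (W + 1) / a) / μ + (3 * (1 / a) + (W + 1) / a) / μ
      = 2 * (W + 4) / (μ * a) := by
    field_simp; ring
  calc |(∫ s in a..b, Real.sin (φ s) * g1 s) + ∫ s in a..b, Real.cos (φ s) * g2 s|
      ≤ |∫ s in a..b, Real.sin (φ s) * g1 s| + |∫ s in a..b, Real.cos (φ s) * g2 s| :=
        abs_add_le _ _
    _ ≤ (3 * (1 / a) + (W + 1) / a) / μ + (3 * (1 / a) + (W + 1) / a) / μ := add_le_add hT1 hT2
    _ = 2 * (W + 4) / (μ * a) := harith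

lemma osc_sin_div_neg (a b μ W : ℝ) (ha : 0 < a) (hab : a ≤ b) (hμ : 0 < μ) (hW : 0 ≤ W)
    (φ φ' φ'' w w' : ℝ → ℝ)
    (hφ : ∀ s ∈ Icc a b, HasDerivAt φ (φ' s) s)
    (hφ'd : ∀ s ∈ Icc a b, HasDerivAt φ' (φ'' s) s)
    (hφ''c : ContinuousOn φ'' (Icc a b))
    (hφμ : ∀ s ∈ Icc a b, φ' s ≤ -μ)
    (hsign : (∀ s ∈ Icc a b, 0 ≤ φ'' s) ∨ (∀ s ∈ Icc a b, φ'' s ≤ 0))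
    (hw : ∀ s ∈ Icc a b, HasDerivAt w (w' s) s)
    (hw'c : ContinuousOn w' (Icc a b))
    (hwb : ∀ s ∈ Icc a b, |w' s| ≤ W / s) :
    |∫ s in a..b, Real.sin (φ s + w s) / s| ≤ 2 * (W + 4) / (μ * a) := by
  have huIcc : uIcc a b = Icc a b := uIcc_of_le hab
  have hflip : ∫ s in a..b, Real.sin (φ s + w s) / s
      = -∫ s in a..b, Real.sin ((-φ s) + (-w s)) / s := by
    rw [← intervalIntegral.integral_neg]
    apply integral_congr
    intro s hs
    show Real.sin (φ s + w s) / s = -(Real.sin ((-φ s) + (-w s)) / s)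
    rw [show -φ s + -w s = -(φ s + w s) by ring, Real.sin_neg]
    ring
  rw [hflip, abs_neg]
  apply osc_sin_div a b μ W ha hab hμ hW (fun s => -φ s) (fun s => -φ' s) (fun s => -φ'' s)
    (fun s => -w s) (fun s => -w' s)
  · exact fun s hs => (hφ s hs).neg
  · exact fun s hs => (hφ'd s hs).neg
  · exact hφ''c.neg
  · intro s hs; have := hφμ s hs; linarith
  · rcases hsign with h1 | h1
    · right; intro s hs; have := h1 s hs; linarith
    · left; intro s hs; have := h1 s hs; linarith
  · exact fun s hs => (hw s hs).neg
  · exact hw'c.neg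
  · intro s hs; rw [abs_neg]; exact hwb s hs

theorem osc_int_salpha_bound
    (H0 lam t0 α : ℝ) (hH0 : 0 < H0) (hlam : 0 < lam) (ht0 : 0 < t0) (hα : 1 < α)
    (h h' : ℝ → ℝ)
    (hhd : ∀ t ∈ Ici t0, HasDerivAt h (h' t) t)
    (hh'c : ContinuousOn h' (Ici t0))
    (hh' : ∀ t ∈ Ici t0, |h' t| ≤ H0 / t) :
    ∀ t ∈ Ici t0,
      |∫ s in t0..t, Real.sin (s ^ α) * Real.cos (2 * lam * s + 2 * h s) / s| ≤
        5 * (H0 + 2) / (lam * t0) + Real.log 3 / (α - 1) := by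
  intro t ht
  have htt : t0 ≤ t := ht
  have hα1 : (0:ℝ) < α - 1 := by linarith
  have hαpos : (0:ℝ) < α := by linarith
  -- continuity of h
  have hhc : ContinuousOn h (Ici t0) := fun s hs => (hhd s hs).continuousAt.continuousWithinAt
  -- stationary-zone endpoints
  set c₁ : ℝ := (lam / α) ^ (1 / (α - 1)) with hc1_def
  set c₂ : ℝ := (3 * lam / α) ^ (1 / (α - 1)) with hc2_def
  have hc1pos : 0 < c₁ := Real.rpow_pos_of_pos (by positivity) _
  have hc2pos : 0 < c₂ := Real.rpow_pos_of_pos (by positivity) _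
  have hc1pow : c₁ ^ (α - 1) = lam / α := by
    rw [hc1_def, ← Real.rpow_mul (by positivity), one_div,
      inv_mul_cancel₀ (ne_of_gt hα1), Real.rpow_one]
  have hc2pow : c₂ ^ (α - 1) = 3 * lam / α := by
    rw [hc2_def, ← Real.rpow_mul (by positivity), one_div,
      inv_mul_cancel₀ (ne_of_gt hα1), Real.rpow_one]
  have hc12 : c₁ ≤ c₂ := by
    apply Real.rpow_le_rpow (by positivity) _ (by positivity)
    exact (div_le_div_iff_of_pos_right hαpos).mpr (by linarith)
  set p : ℝ := max t0 (min c₁ t) with hp_def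
  set q : ℝ := max t0 (min c₂ t) with hq_def
  have ht0p : t0 ≤ p := le_max_left _ _
  have hpq : p ≤ q := max_le_max (le_refl t0) (min_le_min_right t hc12)
  have hqt : q ≤ t := max_le htt (min_le_right _ _)
  have hpt : p ≤ t := le_trans hpq hqt
  have hppos : 0 < p := lt_of_lt_of_le ht0 ht0p
  have hqpos : 0 < q := lt_of_lt_of_le hppos hpq
  -- subset facts
  have hsubIci : Icc t0 t ⊆ Ici t0 := fun x hx => hx.1
  have hsub1 : Icc t0 p ⊆ Icc t0 t := Icc_subset_Icc (le_refl _) hpt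
  have hsub2 : Icc p q ⊆ Icc t0 t := Icc_subset_Icc ht0p hqt
  have hsub3 : Icc q t ⊆ Icc t0 t := Icc_subset_Icc (le_trans ht0p hpq) (le_refl _)
  have hspos : ∀ s ∈ Icc t0 t, (0:ℝ) < s := fun s hs => lt_of_lt_of_le ht0 hs.1
  -- derivative package
  have hφd : ∀ κ : ℝ, ∀ s ∈ Icc t0 t, HasDerivAt (fun x : ℝ => x ^ α + κ * x)
      (α * s ^ (α - 1) + κ) s := by
    intro κ s hs
    have hsp := hspos s hs
    have h1 := (Real.hasDerivAt_rpow_const (p := α) (Or.inl (ne_of_gt hsp))).fun_add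
      ((hasDerivAt_id s).const_mul κ)
    simpa using h1
  have hφ'd : ∀ κ : ℝ, ∀ s ∈ Icc t0 t, HasDerivAt (fun x : ℝ => α * x ^ (α - 1) + κ)
      (α * ((α - 1) * s ^ (α - 1 - 1))) s := by
    intro κ s hs
    have hsp := hspos s hs
    exact ((Real.hasDerivAt_rpow_const (p := α - 1) (Or.inl (ne_of_gt hsp))).const_mul
      α).add_const κ
  have hφ''c : ContinuousOn (fun s : ℝ => α * ((α - 1) * s ^ (α - 1 - 1))) (Icc t0 t) := by
    intro s hs
    exact (continuousAt_const.mul (continuousAt_const.mul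
      (Real.continuousAt_rpow_const s (α - 1 - 1)
        (Or.inl (ne_of_gt (hspos s hs)))))).continuousWithinAt
  have hφ''pos : ∀ s ∈ Icc t0 t, 0 ≤ α * ((α - 1) * s ^ (α - 1 - 1)) := by
    intro s hs
    have := Real.rpow_pos_of_pos (hspos s hs) (α - 1 - 1)
    positivity
  -- w package
  have hwd : ∀ s ∈ Icc t0 t, HasDerivAt (fun x => 2 * h x) (2 * h' s) s :=
    fun s hs => (hhd s (hsubIci hs)).const_mul 2
  have hwd' : ∀ s ∈ Icc t0 t, HasDerivAt (fun x => -2 * h x) (-2 * h' s) s :=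
    fun s hs => (hhd s (hsubIci hs)).const_mul (-2)
  have hw'c : ContinuousOn (fun s => 2 * h' s) (Icc t0 t) :=
    continuousOn_const.mul (hh'c.mono hsubIci)
  have hw'c' : ContinuousOn (fun s => -2 * h' s) (Icc t0 t) :=
    continuousOn_const.mul (hh'c.mono hsubIci)
  have hwb : ∀ s ∈ Icc t0 t, |2 * h' s| ≤ 2 * H0 / s := by
    intro s hs
    rw [abs_mul, abs_two]
    calc 2 * |h' s| ≤ 2 * (H0 / s) := by
          have := hh' s (hsubIci hs); linarith
      _ = 2 * H0 / s := by ring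
  have hwb' : ∀ s ∈ Icc t0 t, |-2 * h' s| ≤ 2 * H0 / s := by
    intro s hs
    have : |-2 * h' s| = |2 * h' s| := by rw [abs_mul, abs_mul]; norm_num
    rw [this]; exact hwb s hs
  -- continuity of the oscillatory integrands
  have hcontf : ∀ κ c : ℝ, ContinuousOn
      (fun s : ℝ => Real.sin ((s ^ α + κ * s) + c * h s) / s) (Icc t0 t) := by
    intro κ c
    apply ContinuousOn.div _ continuousOn_id (fun s hs => ne_of_gt (hspos s hs))
    apply Real.continuous_sin.comp_continuousOn
    apply ContinuousOn.add
    · apply ContinuousOn.add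
      · intro s hs
        exact (Real.continuousAt_rpow_const s α
          (Or.inl (ne_of_gt (hspos s hs)))).continuousWithinAt
      · exact continuousOn_const.mul continuousOn_id
    · exact continuousOn_const.mul (hhc.mono hsubIci)
  have hfint : ∀ κ c a b : ℝ, a ∈ Icc t0 t → b ∈ Icc t0 t →
      IntervalIntegrable (fun s : ℝ => Real.sin ((s ^ α + κ * s) + c * h s) / s) volume a b := by
    intro κ c a b ha hb
    apply ContinuousOn.intervalIntegrable
    exact (hcontf κ c).mono (uIcc_subset_Icc ha hb)
  -- split the integrand via product-to-sum
  have hmain_split : ∫ s in t0..t, Real.sin (s ^ α) * Real.cos (2 * lam * s + 2 * h s) / s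
      = (1/2) * (∫ s in t0..t, Real.sin ((s ^ α + 2 * lam * s) + 2 * h s) / s)
        + (1/2) * (∫ s in t0..t, Real.sin ((s ^ α + -(2 * lam) * s) + -2 * h s) / s) := by
    rw [← intervalIntegral.integral_const_mul, ← intervalIntegral.integral_const_mul,
      ← intervalIntegral.integral_add
        ((hfint (2*lam) 2 t0 t ⟨le_refl _, htt⟩ ⟨htt, le_refl _⟩).const_mul (1/2))
        ((hfint (-(2*lam)) (-2) t0 t ⟨le_refl _, htt⟩ ⟨htt, le_refl _⟩).const_mul (1/2))]
    apply integral_congr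
    intro s hs
    rw [uIcc_of_le htt] at hs
    have hsne : s ≠ 0 := ne_of_gt (hspos s hs)
    show Real.sin (s ^ α) * Real.cos (2 * lam * s + 2 * h s) / s
      = 1/2 * (Real.sin ((s ^ α + 2 * lam * s) + 2 * h s) / s)
        + 1/2 * (Real.sin ((s ^ α + -(2 * lam) * s) + -2 * h s) / s)
    rw [show (s ^ α + 2 * lam * s) + 2 * h s = s ^ α + (2 * lam * s + 2 * h s) by ring,
      show (s ^ α + -(2 * lam) * s) + -2 * h s = s ^ α - (2 * lam * s + 2 * h s) by ring,
      Real.sin_add, Real.sin_sub]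
    field_simp
    ring
  -- bound for the + phase over [t0, t]
  have hBplus : |∫ s in t0..t, Real.sin ((s ^ α + 2 * lam * s) + 2 * h s) / s|
      ≤ 2 * (2 * H0 + 4) / (2 * lam * t0) := by
    apply osc_sin_div t0 t (2 * lam) (2 * H0) ht0 htt (by positivity) (by positivity)
      (fun s => s ^ α + 2 * lam * s) (fun s => α * s ^ (α - 1) + 2 * lam)
      (fun s => α * ((α - 1) * s ^ (α - 1 - 1))) (fun s => 2 * h s) (fun s => 2 * h' s)
    · exact hφd (2 * lam)
    · exact hφ'd (2 * lam)
    · exact hφ''c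
    · intro s hs
      have : 0 < α * s ^ (α - 1) := by
        have := Real.rpow_pos_of_pos (hspos s hs) (α - 1); positivity
      linarith
    · exact Or.inl hφ''pos
    · exact hwd
    · exact hw'c
    · exact hwb
  -- the minus-phase integrand
  set fm : ℝ → ℝ := fun s => Real.sin ((s ^ α + -(2 * lam) * s) + -2 * h s) / s with hfm_def
  -- split the minus integral at p and q
  have hsplit3 : ∫ s in t0..t, fm s = (∫ s in t0..p, fm s) + (∫ s in p..q, fm s)
      + ∫ s in q..t, fm s := by
    have h1 := intervalIntegral.integral_add_adjacent_intervals
      (hfint (-(2*lam)) (-2) t0 p ⟨le_refl _, htt⟩ ⟨ht0p, hpt⟩)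
      (hfint (-(2*lam)) (-2) p q ⟨ht0p, hpt⟩ ⟨le_trans ht0p hpq, hqt⟩)
    have h2 := intervalIntegral.integral_add_adjacent_intervals
      (hfint (-(2*lam)) (-2) t0 q ⟨le_refl _, htt⟩ ⟨le_trans ht0p hpq, hqt⟩)
      (hfint (-(2*lam)) (-2) q t ⟨le_trans ht0p hpq, hqt⟩ ⟨htt, le_refl _⟩)
    rw [← h2, ← h1]
  -- Region 1 : [t0, p]
  have hB1 : |∫ s in t0..p, fm s| ≤ 2 * (2 * H0 + 4) / (lam * t0) := by
    rcases eq_or_lt_of_le ht0p with heq | hlt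
    · rw [← heq, intervalIntegral.integral_same, abs_zero]
      positivity
    · -- here p = min c₁ t
      have hm : t0 < min c₁ t := by
        by_contra hcon
        push_neg at hcon
        have : p = t0 := max_eq_left hcon
        linarith
      have hpm : p = min c₁ t := max_eq_right (le_of_lt hm)
      have hpc1 : p ≤ c₁ := by rw [hpm]; exact min_le_left _ _
      apply osc_sin_div_neg t0 p lam (2 * H0) ht0 (le_of_lt hlt) hlam (by positivity)
        (fun s => s ^ α + -(2 * lam) * s) (fun s => α * s ^ (α - 1) + -(2 * lam))
        (fun s => α * ((α - 1) * s ^ (α - 1 - 1))) (fun s => -2 * h s) (fun s => -2 * h' s)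
      · exact fun s hs => hφd (-(2 * lam)) s (hsub1 hs)
      · exact fun s hs => hφ'd (-(2 * lam)) s (hsub1 hs)
      · exact hφ''c.mono hsub1
      · intro s hs
        have hsp := hspos s (hsub1 hs)
        have hsc1 : s ≤ c₁ := le_trans hs.2 hpc1
        have h1 : s ^ (α - 1) ≤ c₁ ^ (α - 1) :=
          Real.rpow_le_rpow (le_of_lt hsp) hsc1 (le_of_lt hα1)
        have h2 : α * s ^ (α - 1) ≤ α * (lam / α) := by
          rw [← hc1pow]; exact mul_le_mul_of_nonneg_left h1 (le_of_lt hαpos)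
        have h3 : α * (lam / α) = lam := by field_simp
        rw [h3] at h2
        linarith
      · exact Or.inl (fun s hs => hφ''pos s (hsub1 hs))
      · exact fun s hs => hwd' s (hsub1 hs)
      · exact hw'c'.mono hsub1
      · exact fun s hs => hwb' s (hsub1 hs)
  -- Region 3 : [q, t]
  have hB3 : |∫ s in q..t, fm s| ≤ 2 * (2 * H0 + 4) / (lam * t0) := by
    rcases eq_or_lt_of_le hqt with heq | hlt
    · rw [heq, intervalIntegral.integral_same, abs_zero]
      positivity
    · have hc2t : c₂ ≤ t := by
        by_contra hcon
        push_neg at hcon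
        have : min c₂ t = t := min_eq_right (le_of_lt hcon)
        have : q = t := by rw [hq_def, this]; exact max_eq_right htt
        linarith
      have hqc2 : c₂ ≤ q := by
        rw [hq_def]
        calc c₂ = min c₂ t := (min_eq_left hc2t).symm
          _ ≤ max t0 (min c₂ t) := le_max_right _ _
      have hstep : |∫ s in q..t, fm s| ≤ 2 * (2 * H0 + 4) / (lam * q) := by
        apply osc_sin_div q t lam (2 * H0) hqpos (le_of_lt hlt) hlam (by positivity)
          (fun s => s ^ α + -(2 * lam) * s) (fun s => α * s ^ (α - 1) + -(2 * lam))
          (fun s => α * ((α - 1) * s ^ (α - 1 - 1))) (fun s => -2 * h s) (fun s => -2 * h' s)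
        · exact fun s hs => hφd (-(2 * lam)) s (hsub3 hs)
        · exact fun s hs => hφ'd (-(2 * lam)) s (hsub3 hs)
        · exact hφ''c.mono hsub3
        · intro s hs
          have hsc2 : c₂ ≤ s := le_trans hqc2 hs.1
          have h1 : c₂ ^ (α - 1) ≤ s ^ (α - 1) :=
            Real.rpow_le_rpow (le_of_lt hc2pos) hsc2 (le_of_lt hα1)
          have h2 : α * (3 * lam / α) ≤ α * s ^ (α - 1) := by
            rw [← hc2pow]; exact mul_le_mul_of_nonneg_left h1 (le_of_lt hαpos)
          have h3 : α * (3 * lam / α) = 3 * lam := by field_simp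
          rw [h3] at h2
          linarith
        · exact Or.inl (fun s hs => hφ''pos s (hsub3 hs))
        · exact fun s hs => hwd' s (hsub3 hs)
        · exact hw'c'.mono hsub3
        · exact fun s hs => hwb' s (hsub3 hs)
      calc |∫ s in q..t, fm s| ≤ 2 * (2 * H0 + 4) / (lam * q) := hstep
        _ ≤ 2 * (2 * H0 + 4) / (lam * t0) := by
            gcongr
            exact le_trans ht0p hpq
  -- Region 2 : [p, q], trivial bound by log
  have hB2 : |∫ s in p..q, fm s| ≤ Real.log 3 / (α - 1) := by
    have hlogpos : 0 ≤ Real.log 3 / (α - 1) := by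
      apply div_nonneg _ (le_of_lt hα1)
      exact Real.log_nonneg (by norm_num)
    rcases eq_or_lt_of_le hpq with heq | hlt
    · rw [← heq, intervalIntegral.integral_same, abs_zero]
      exact hlogpos
    · -- p ≥ c₁ and q ≤ c₂
      have hqle : q ≤ c₂ := by
        have hm : t0 < min c₂ t := by
          by_contra hcon
          push_neg at hcon
          have : q = t0 := max_eq_left hcon
          linarith [lt_of_le_of_lt ht0p hlt]
        rw [hq_def, max_eq_right (le_of_lt hm)]
        exact min_le_left _ _
      have hpge : c₁ ≤ p := by
        rcases le_or_gt c₁ t with hct | hct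
        · calc c₁ = min c₁ t := (min_eq_left hct).symm
            _ ≤ p := le_max_right _ _
        · exfalso
          have hptt : p = t := by
            rw [hp_def, min_eq_right (le_of_lt hct), max_eq_right htt]
          linarith
      have hp0 : 0 < p := hppos
      calc |∫ s in p..q, fm s| ≤ ∫ s in p..q, |fm s| :=
            abs_integral_le_integral_abs (le_of_lt hlt)
        _ ≤ ∫ s in p..q, s⁻¹ := by
            apply integral_mono_on (le_of_lt hlt)
            · apply ContinuousOn.intervalIntegrable
              exact (((hcontf (-(2*lam)) (-2)).mono hsub2).mono
                (by rw [uIcc_of_le (le_of_lt hlt)])).abs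
            · apply ContinuousOn.intervalIntegrable
              apply ContinuousOn.inv₀ continuousOn_id
              intro s hs
              rw [uIcc_of_le (le_of_lt hlt)] at hs
              exact ne_of_gt (hspos s (hsub2 hs))
            · intro s hs
              have hsp : 0 < s := hspos s (hsub2 hs)
              show |Real.sin ((s ^ α + -(2 * lam) * s) + -2 * h s) / s| ≤ s⁻¹
              rw [abs_div, abs_of_pos hsp]
              calc |Real.sin ((s ^ α + -(2 * lam) * s) + -2 * h s)| / s ≤ 1 / s :=
                    div_le_div₀ (by norm_num) (Real.abs_sin_le_one _) hsp (le_refl s)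
                _ = s⁻¹ := one_div s
        _ = Real.log (q / p) := by
            apply integral_inv
            rw [uIcc_of_le (le_of_lt hlt)]
            intro hmem
            exact absurd hmem.1 (not_le.mpr hp0)
        _ ≤ Real.log (c₂ / c₁) := by
            apply Real.log_le_log (by positivity)
            exact div_le_div₀ (le_of_lt hc2pos) hqle hc1pos hpge
        _ = Real.log 3 / (α - 1) := by
            rw [hc2_def, hc1_def, ← Real.div_rpow (by positivity) (by positivity),
              show (3 * lam / α) / (lam / α) = 3 from
                (div_eq_iff (ne_of_gt (by positivity))).mpr (by ring),
              Real.log_rpow (by norm_num : (0:ℝ) < 3)]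
            ring
  -- combine everything
  have hBm : |∫ s in t0..t, fm s| ≤ 2 * (2 * H0 + 4) / (lam * t0) + Real.log 3 / (α - 1)
      + 2 * (2 * H0 + 4) / (lam * t0) := by
    rw [hsplit3]
    calc |(∫ s in t0..p, fm s) + (∫ s in p..q, fm s) + ∫ s in q..t, fm s|
        ≤ |(∫ s in t0..p, fm s) + (∫ s in p..q, fm s)| + |∫ s in q..t, fm s| := abs_add_le _ _
      _ ≤ |∫ s in t0..p, fm s| + |∫ s in p..q, fm s| + |∫ s in q..t, fm s| := by
          gcongr
          exact abs_add_le _ _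
      _ ≤ 2 * (2 * H0 + 4) / (lam * t0) + Real.log 3 / (α - 1)
          + 2 * (2 * H0 + 4) / (lam * t0) := add_le_add (add_le_add hB1 hB2) hB3
  have hL : 0 ≤ Real.log 3 / (α - 1) :=
    div_nonneg (Real.log_nonneg (by norm_num)) (le_of_lt hα1)
  have hlt0 : lam * t0 ≠ 0 := by positivity
  have hα1ne : α - 1 ≠ 0 := ne_of_gt hα1
  calc |∫ s in t0..t, Real.sin (s ^ α) * Real.cos (2 * lam * s + 2 * h s) / s|
      = |(1/2) * (∫ s in t0..t, Real.sin ((s ^ α + 2 * lam * s) + 2 * h s) / s)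
        + (1/2) * ∫ s in t0..t, fm s| := by rw [hmain_split]
    _ ≤ |(1/2) * (∫ s in t0..t, Real.sin ((s ^ α + 2 * lam * s) + 2 * h s) / s)|
        + |(1/2) * ∫ s in t0..t, fm s| := abs_add_le _ _
    _ = 1/2 * |∫ s in t0..t, Real.sin ((s ^ α + 2 * lam * s) + 2 * h s) / s|
        + 1/2 * |∫ s in t0..t, fm s| := by rw [abs_mul, abs_mul, abs_of_pos (by norm_num : (0:ℝ) < 1/2)]
    _ ≤ 1/2 * (2 * (2 * H0 + 4) / (2 * lam * t0))
        + 1/2 * (2 * (2 * H0 + 4) / (lam * t0) + Real.log 3 / (α - 1)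
          + 2 * (2 * H0 + 4) / (lam * t0)) :=
        add_le_add (mul_le_mul_of_nonneg_left hBplus (by norm_num))
          (mul_le_mul_of_nonneg_left hBm (by norm_num))
    _ = 5 * (H0 + 2) / (lam * t0) + Real.log 3 / (α - 1) / 2 := by
        field_simp
        ring
    _ ≤ 5 * (H0 + 2) / (lam * t0) + Real.log 3 / (α - 1) := by linarith
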